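/- (Regime shift for the contraction rates γ_{k,h}.) Let K ∈ ℕ, h > 0, T = Kh, t_k = kh, L₀, L₁ > 0, and define h̄ = min { log 2 / max_{0 ≤ t ≤ T} f(t), inf_{τ(α₀,M₀) < t ≤ T} [ (1/4) g(t)² (α(t) − M(t)) ] / [ (1/8) g(t)⁴ L(t)² + (1/2) L₁ g(t)² ] }. If 0 < h < h̄, then γ_{k,h} < 1 for every k ∈ {1, …, ⌊K − τ(α₀,M₀)/h⌋} and γ_{k,h} > 1 for every k ∈ {⌈K − τ(α₀,M₀)/h⌉ + 1, …, K}. Moreover, for any ℓ ∈ ℕ, if γ̃_{k,h} denotes the corresponding quantity with T replaced by T̃ = (K+ℓ)h, then γ̃_{k+ℓ,h} = γ_{k,h} for every k ∈ {1, …, K}. -/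

import Mathlib

/-- `c₀(t) = exp(∫₀ᵗ f(s) ds)`. -/
noncomputable def c0 (f : ℝ → ℝ) (t : ℝ) : ℝ := Real.exp (∫ s in (0:ℝ)..t, f s)

/-- `c₁(t) = ∫₀ᵗ exp(−2 ∫ₛᵗ f(v) dv) g(s)² ds`. -/
noncomputable def c1 (f g : ℝ → ℝ) (t : ℝ) : ℝ :=
  ∫ s in (0:ℝ)..t, Real.exp (-2 * ∫ v in s..t, f v) * g s ^ 2

/-- `∫₀ᵗ exp(2 ∫₀ˢ f(v) dv) g(s)² ds`. -/
noncomputable def Jfg (f g : ℝ → ℝ) (t : ℝ) : ℝ :=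
  ∫ s in (0:ℝ)..t, Real.exp (2 * ∫ v in (0:ℝ)..s, f v) * g s ^ 2

/-- `α(t) = 1 / (α₀⁻¹ c₀(t)⁻² + c₁(t))`. -/
noncomputable def alphaT (f g : ℝ → ℝ) (α₀ t : ℝ) : ℝ :=
  1 / (α₀⁻¹ * ((c0 f t)⁻¹) ^ 2 + c1 f g t)

/-- `M(t) = M₀ c₀(t)² / (1 + α₀ ∫₀ᵗ exp(2 ∫₀ˢ f(v) dv) g(s)² ds)²`. -/
noncomputable def MT (f g : ℝ → ℝ) (α₀ M₀ t : ℝ) : ℝ :=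
  M₀ * c0 f t ^ 2 / (1 + α₀ * Jfg f g t) ^ 2

/-- The regime-shift time `τ(α₀, M₀)`. -/
noncomputable def tau (f g : ℝ → ℝ) (α₀ M₀ : ℝ) : ℝ :=
  if 0 < α₀ - M₀ then 0
  else sInf { t : ℝ | 0 < t ∧ (M₀ - α₀) / α₀ ^ 2 < Jfg f g t }

/-- `ξ(T)`. -/
noncomputable def xiT (f g : ℝ → ℝ) (T : ℝ) : ℝ :=
  sSup ((fun t => min (Real.exp (2 * ∫ s in (0:ℝ)..t, f s))
    (Real.exp (2 * ∫ s in (0:ℝ)..t, f s) / (Jfg f g t) ^ 2)) '' Set.Icc 0 T)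

/-- `η(T)`. -/
noncomputable def etaT (f g : ℝ → ℝ) (T : ℝ) : ℝ :=
  sSup ((fun t => min (Real.exp (2 * ∫ s in (0:ℝ)..t, f s)) (1 / c1 f g t)) '' Set.Icc 0 T)

/-- The Lipschitz constant `L(t)`. -/
noncomputable def Lt (f g : ℝ → ℝ) (α₀ M₀ L₀ t : ℝ) : ℝ :=
  max (min (1 / c1 f g t) (c0 f t ^ 2 * L₀))
    (-(alphaT f g α₀ t - MT f g α₀ M₀ t))

/-- The integrand `t ↦ δ_k(T−t)`, with `tkm1 = t_{k−1}`. -/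
noncomputable def deltaInt (f g : ℝ → ℝ) (α₀ M₀ L₀ T h tkm1 t : ℝ) : ℝ :=
  1/2 * Real.exp (-(∫ s in tkm1..t, f (T - s))) * g (T - t) ^ 2 *
      (alphaT f g α₀ (T - t) - MT f g α₀ M₀ (T - t)) -
    1/8 * h * g (T - t) ^ 4 * Lt f g α₀ M₀ L₀ (T - t) ^ 2

/-- The contraction rate `γ_{k,h}`. -/
noncomputable def gammaK (f g : ℝ → ℝ) (α₀ M₀ L₀ L₁ T h : ℝ) (k : ℕ) : ℝ :=
  1 - (∫ t in (((k : ℝ) - 1) * h)..((k : ℝ) * h),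
        deltaInt f g α₀ M₀ L₀ T h (((k : ℝ) - 1) * h) t) +
    1/2 * L₁ * h * ∫ t in (((k : ℝ) - 1) * h)..((k : ℝ) * h), g (T - t) ^ 2

/-- The step-size threshold `h̄`. -/
noncomputable def hbar (f g : ℝ → ℝ) (α₀ M₀ L₀ L₁ T : ℝ) : ℝ :=
  min (Real.log 2 / sSup (f '' Set.Icc 0 T))
    (sInf ((fun t =>
        (1/4 * g t ^ 2 * (alphaT f g α₀ t - MT f g α₀ M₀ t)) /
          (1/8 * g t ^ 4 * Lt f g α₀ M₀ L₀ t ^ 2 + 1/2 * L₁ * g t ^ 2)) ''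
      Set.Ioc (tau f g α₀ M₀) T))


open Set MeasureTheory intervalIntegral Topology Filter

section Helpers

variable {f g : ℝ → ℝ} {T : ℝ}

lemma II_of_contOn (hf : ContinuousOn f (Set.Ici 0)) {a b : ℝ} (ha : 0 ≤ a) (hb : 0 ≤ b) :
    IntervalIntegrable f volume a b :=
  (hf.mono (fun x hx => le_trans (le_min ha hb) hx.1)).intervalIntegrable

lemma contOn_prim (hf : ContinuousOn f (Set.Ici 0)) (hT : 0 ≤ T) :
    ContinuousOn (fun t => ∫ s in (0:ℝ)..t, f s) (Set.Icc 0 T) := by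
  have hint : IntegrableOn f (Set.uIcc 0 T) volume := by
    rw [Set.uIcc_of_le hT]
    exact (hf.mono (fun x hx => hx.1)).integrableOn_Icc
  simpa [Set.uIcc_of_le hT] using intervalIntegral.continuousOn_primitive_interval hint

lemma c0_contOn (hf : ContinuousOn f (Set.Ici 0)) (hT : 0 ≤ T) :
    ContinuousOn (c0 f) (Set.Icc 0 T) :=
  Real.continuous_exp.comp_continuousOn (contOn_prim hf hT)

lemma Jfg_integrand_contOn (hf : ContinuousOn f (Set.Ici 0)) (hg : ContinuousOn g (Set.Ici 0))
    (hT : 0 ≤ T) :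
    ContinuousOn (fun s => Real.exp (2 * ∫ v in (0:ℝ)..s, f v) * g s ^ 2) (Set.Icc 0 T) := by
  have h1 : ContinuousOn (fun s : ℝ => 2 * ∫ v in (0:ℝ)..s, f v) (Set.Icc 0 T) :=
    continuousOn_const.mul (contOn_prim hf hT)
  have h2 : ContinuousOn (fun s : ℝ => Real.exp (2 * ∫ v in (0:ℝ)..s, f v)) (Set.Icc 0 T) :=
    Real.continuous_exp.comp_continuousOn h1
  exact h2.mul ((hg.mono (fun x hx => hx.1)).pow 2)

lemma Jfg_contOn (hf : ContinuousOn f (Set.Ici 0)) (hg : ContinuousOn g (Set.Ici 0))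
    (hT : 0 ≤ T) : ContinuousOn (Jfg f g) (Set.Icc 0 T) := by
  have hint : IntegrableOn (fun s => Real.exp (2 * ∫ v in (0:ℝ)..s, f v) * g s ^ 2)
      (Set.uIcc 0 T) volume := by
    rw [Set.uIcc_of_le hT]
    exact (Jfg_integrand_contOn hf hg hT).integrableOn_Icc
  have hprim := intervalIntegral.continuousOn_primitive_interval hint
  rw [Set.uIcc_of_le hT] at hprim
  exact hprim

lemma Jfg_nonneg {t : ℝ} (ht : 0 ≤ t) : 0 ≤ Jfg f g t := by
  apply intervalIntegral.integral_nonneg ht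
  intro u _
  positivity

lemma Jfg_pos (hf : ContinuousOn f (Set.Ici 0)) (hg : ContinuousOn g (Set.Ici 0))
    (hg_pos : ∀ t, 0 < t → 0 < g t) {t : ℝ} (ht : 0 < t) : 0 < Jfg f g t := by
  apply intervalIntegral_pos_of_pos_on _ _ ht
  · apply ContinuousOn.intervalIntegrable
    rw [Set.uIcc_of_le ht.le]
    exact Jfg_integrand_contOn hf hg ht.le
  · intro x hx
    have := hg_pos x hx.1
    positivity


lemma c1_eq (hf : ContinuousOn f (Set.Ici 0)) {t : ℝ} (ht : 0 ≤ t) :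
    c1 f g t = Real.exp (-2 * ∫ v in (0:ℝ)..t, f v) * Jfg f g t := by
  unfold c1 Jfg
  rw [← intervalIntegral.integral_const_mul]
  apply intervalIntegral.integral_congr
  intro s hs
  rw [Set.uIcc_of_le ht] at hs
  have hsub : (∫ v in s..t, f v) = (∫ v in (0:ℝ)..t, f v) - ∫ v in (0:ℝ)..s, f v :=
    (intervalIntegral.integral_interval_sub_left (II_of_contOn hf le_rfl ht)
      (II_of_contOn hf le_rfl hs.1)).symm
  simp only
  rw [hsub, ← mul_assoc, ← Real.exp_add]
  ring_nf

lemma c1_nonneg (hf : ContinuousOn f (Set.Ici 0)) {t : ℝ} (ht : 0 ≤ t) : 0 ≤ c1 f g t := by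
  rw [c1_eq hf ht]
  exact mul_nonneg (Real.exp_pos _).le (Jfg_nonneg ht)

lemma c1_pos (hf : ContinuousOn f (Set.Ici 0)) (hg : ContinuousOn g (Set.Ici 0))
    (hg_pos : ∀ t, 0 < t → 0 < g t) {t : ℝ} (ht : 0 < t) : 0 < c1 f g t := by
  rw [c1_eq hf ht.le]
  exact mul_pos (Real.exp_pos _) (Jfg_pos hf hg hg_pos ht)

lemma c1_contOn (hf : ContinuousOn f (Set.Ici 0)) (hg : ContinuousOn g (Set.Ici 0))
    (hT : 0 ≤ T) : ContinuousOn (c1 f g) (Set.Icc 0 T) := by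
  have h1 : ContinuousOn (fun t : ℝ => Real.exp (-2 * ∫ v in (0:ℝ)..t, f v) * Jfg f g t)
      (Set.Icc 0 T) :=
    (Real.continuous_exp.comp_continuousOn
      (continuousOn_const.mul (contOn_prim hf hT))).mul (Jfg_contOn hf hg hT)
  exact h1.congr (fun t ht => c1_eq hf ht.1)

lemma alpha_den_pos (hf : ContinuousOn f (Set.Ici 0)) (hα₀ : (0:ℝ) < α₀) {t : ℝ} (ht : 0 ≤ t) :
    0 < α₀⁻¹ * ((c0 f t)⁻¹) ^ 2 + c1 f g t := by
  have h1 : 0 < α₀⁻¹ * ((c0 f t)⁻¹) ^ 2 := by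
    have := Real.exp_pos (∫ s in (0:ℝ)..t, f s)
    unfold c0
    positivity
  linarith [c1_nonneg (g := g) hf ht]

lemma alphaT_contOn (hf : ContinuousOn f (Set.Ici 0)) (hg : ContinuousOn g (Set.Ici 0))
    (hα₀ : (0:ℝ) < α₀) (hT : 0 ≤ T) :
    ContinuousOn (alphaT f g α₀) (Set.Icc 0 T) := by
  unfold alphaT
  apply ContinuousOn.div continuousOn_const
  · exact (continuousOn_const.mul (((c0_contOn hf hT).inv₀
      (fun t _ => (by unfold c0; positivity : (0:ℝ) < c0 f t).ne')).pow 2)).add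
      (c1_contOn hf hg hT)
  · exact fun t ht => (alpha_den_pos hf hα₀ ht.1).ne'

lemma MT_contOn (hf : ContinuousOn f (Set.Ici 0)) (hg : ContinuousOn g (Set.Ici 0))
    (hα₀ : (0:ℝ) < α₀) (hT : 0 ≤ T) :
    ContinuousOn (MT f g α₀ M₀) (Set.Icc 0 T) := by
  unfold MT
  apply ContinuousOn.div
  · exact continuousOn_const.mul ((c0_contOn hf hT).pow 2)
  · exact (continuousOn_const.add (continuousOn_const.mul (Jfg_contOn hf hg hT))).pow 2
  · intro t ht
    have hJ := Jfg_nonneg (f := f) (g := g) ht.1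
    positivity

lemma alpha_sub_M_eq (hf : ContinuousOn f (Set.Ici 0)) (hα₀ : (0:ℝ) < α₀) {t : ℝ} (ht : 0 ≤ t) :
    alphaT f g α₀ t - MT f g α₀ M₀ t =
      c0 f t ^ 2 * (α₀ - M₀ + α₀ ^ 2 * Jfg f g t) / (1 + α₀ * Jfg f g t) ^ 2 := by
  have hJ := Jfg_nonneg (f := f) (g := g) ht
  unfold alphaT MT
  rw [c1_eq hf ht]
  unfold c0
  set x := ∫ s in (0:ℝ)..t, f s with hx
  set J := Jfg f g t with hJdef
  have hE : Real.exp (-2 * x) = ((Real.exp x) ^ 2)⁻¹ := by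
    rw [show (-2 : ℝ) * x = -(2 * x) by ring, Real.exp_neg, two_mul, Real.exp_add, sq]
  rw [hE]
  have hEpos : (0:ℝ) < Real.exp x := Real.exp_pos x
  have hD : (0:ℝ) < 1 + α₀ * J := by positivity
  field_simp
  ring


lemma comp_sub_contOn {F : ℝ → ℝ} (hF : ContinuousOn F (Set.Icc 0 T)) {a b : ℝ}
    (ha : 0 ≤ a) (hbT : b ≤ T) : ContinuousOn (fun t => F (T - t)) (Set.Icc a b) :=
  hF.comp (continuous_const.sub continuous_id).continuousOn
    (fun t ht => ⟨by simp; linarith [ht.2], by simp; linarith [ht.1]⟩)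

lemma Lt_contOn (hf : ContinuousOn f (Set.Ici 0)) (hg : ContinuousOn g (Set.Ici 0))
    (hg_pos : ∀ t, 0 < t → 0 < g t) (hα₀ : (0:ℝ) < α₀) (hT : 0 ≤ T) :
    ContinuousOn (Lt f g α₀ M₀ L₀) (Set.Ioc 0 T) := by
  unfold Lt
  apply ContinuousOn.sup
  · apply ContinuousOn.inf
    · exact continuousOn_const.div ((c1_contOn hf hg hT).mono Set.Ioc_subset_Icc_self)
        (fun t ht => (c1_pos hf hg hg_pos ht.1).ne')
    · exact (((c0_contOn hf hT).mono Set.Ioc_subset_Icc_self).pow 2).mul continuousOn_const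
  · exact (((alphaT_contOn hf hg hα₀ hT).mono Set.Ioc_subset_Icc_self).sub
      ((MT_contOn hf hg hα₀ hT).mono Set.Ioc_subset_Icc_self)).neg

lemma Lt_abs_le (hf : ContinuousOn f (Set.Ici 0)) (hg : ContinuousOn g (Set.Ici 0))
    (hg_pos : ∀ t, 0 < t → 0 < g t) (hL₀ : 0 ≤ L₀) {CB CA : ℝ}
    (hCB : ∀ s ∈ Set.Icc 0 T, c0 f s ^ 2 * L₀ ≤ CB)
    (hCA : ∀ s ∈ Set.Icc 0 T, |alphaT f g α₀ s - MT f g α₀ M₀ s| ≤ CA) :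
    ∀ s ∈ Set.Ioc 0 T, |Lt f g α₀ M₀ L₀ s| ≤ max CB CA := by
  intro s hs
  have hc1 := c1_pos hf hg hg_pos hs.1
  have hc0 : (0:ℝ) < c0 f s := Real.exp_pos _
  have hmem : s ∈ Set.Icc 0 T := ⟨hs.1.le, hs.2⟩
  have hmin0 : 0 ≤ min (1 / c1 f g s) (c0 f s ^ 2 * L₀) :=
    le_min (by positivity) (by positivity)
  have hminB : min (1 / c1 f g s) (c0 f s ^ 2 * L₀) ≤ CB :=
    (min_le_right _ _).trans (hCB s hmem)
  have hA := hCA s hmem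
  rw [abs_le] at hA ⊢
  unfold Lt
  constructor
  · have : (0:ℝ) ≤ max CB CA := le_trans hmin0 (hminB.trans (le_max_left _ _))
    calc -(max CB CA) ≤ 0 := by linarith
    _ ≤ _ := le_trans hmin0 (le_max_left _ _)
  · apply max_le (hminB.trans (le_max_left _ _))
    have : -(alphaT f g α₀ s - MT f g α₀ M₀ s) ≤ CA := by linarith [hA.1]
    exact this.trans (le_max_right _ _)

lemma gT_sq_II (hg : ContinuousOn g (Set.Ici 0)) {a b : ℝ} (hab : a ≤ b)
    (hbT : b ≤ T) : IntervalIntegrable (fun t => g (T - t) ^ 2) volume a b := by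
  apply ContinuousOn.intervalIntegrable
  rw [Set.uIcc_of_le hab]
  have hmaps : Set.MapsTo (fun t : ℝ => T - t) (Set.Icc a b) (Set.Ici (0:ℝ)) := by
    intro t ht
    simp only [Set.mem_Ici]
    linarith [ht.2]
  exact ((hg.comp (continuous_const.sub continuous_id).continuousOn hmaps).pow 2)

lemma deltaInt_II (hf : ContinuousOn f (Set.Ici 0)) (hg : ContinuousOn g (Set.Ici 0))
    (hg_pos : ∀ t, 0 < t → 0 < g t) (hα₀ : (0:ℝ) < α₀) (hL₀ : 0 ≤ L₀) {h a b : ℝ}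
    (ha : 0 ≤ a) (hab : a ≤ b) (hbT : b ≤ T) :
    IntervalIntegrable (deltaInt f g α₀ M₀ L₀ T h a) volume a b := by
  have hT : (0:ℝ) ≤ T := le_trans (ha.trans hab) hbT
  have hmapIcc : ∀ t ∈ Set.Icc a b, T - t ∈ Set.Icc (0:ℝ) T :=
    fun t ht => ⟨by linarith [ht.2], by linarith [ht.1]⟩
  have hfT : ContinuousOn (fun s => f (T - s)) (Set.Icc a b) :=
    comp_sub_contOn (hf.mono (fun x hx => hx.1)) ha hbT
  have hprim : ContinuousOn (fun t => ∫ s in a..t, f (T - s)) (Set.Icc a b) := by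
    have hint : IntegrableOn (fun s => f (T - s)) (Set.uIcc a b) volume := by
      rw [Set.uIcc_of_le hab]; exact hfT.integrableOn_Icc
    simpa [Set.uIcc_of_le hab] using intervalIntegral.continuousOn_primitive_interval hint
  have hE : ContinuousOn (fun t => Real.exp (-(∫ s in a..t, f (T - s)))) (Set.Icc a b) :=
    Real.continuous_exp.comp_continuousOn hprim.neg
  have hgT : ContinuousOn (fun t => g (T - t)) (Set.Icc a b) :=
    comp_sub_contOn (hg.mono (fun x hx => hx.1)) ha hbT
  have haM : ContinuousOn (fun t => alphaT f g α₀ (T - t) - MT f g α₀ M₀ (T - t))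
      (Set.Icc a b) :=
    (comp_sub_contOn (alphaT_contOn hf hg hα₀ hT) ha hbT).sub
      (comp_sub_contOn (MT_contOn hf hg hα₀ hT) ha hbT)
  have hP1 : IntervalIntegrable (fun t => 1/2 * Real.exp (-(∫ s in a..t, f (T - s))) *
      g (T - t) ^ 2 * (alphaT f g α₀ (T - t) - MT f g α₀ M₀ (T - t))) volume a b := by
    apply ContinuousOn.intervalIntegrable
    rw [Set.uIcc_of_le hab]
    exact ((continuousOn_const.mul hE).mul (hgT.pow 2)).mul haM
  have hP2 : IntervalIntegrable (fun t => 1/8 * h * g (T - t) ^ 4 *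
      Lt f g α₀ M₀ L₀ (T - t) ^ 2) volume a b := by
    obtain ⟨Cg, hCg⟩ := isCompact_Icc.exists_bound_of_continuousOn
      (hg.mono (fun x (hx : x ∈ Set.Icc (0:ℝ) T) => hx.1))
    obtain ⟨CB, hCB⟩ := isCompact_Icc.exists_bound_of_continuousOn
      (((c0_contOn hf hT).pow 2).mul (continuousOn_const (c := L₀)))
    obtain ⟨CA, hCA⟩ := isCompact_Icc.exists_bound_of_continuousOn
      ((alphaT_contOn (g := g) hf hg hα₀ hT).sub (MT_contOn (M₀ := M₀) hf hg hα₀ hT))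
    have hCB' : ∀ s ∈ Set.Icc (0:ℝ) T, c0 f s ^ 2 * L₀ ≤ CB :=
      fun s hs => (le_abs_self _).trans (hCB s hs)
    have hCA' : ∀ s ∈ Set.Icc (0:ℝ) T, |alphaT f g α₀ s - MT f g α₀ M₀ s| ≤ CA :=
      fun s hs => hCA s hs
    set M := max CB CA with hM
    rw [intervalIntegrable_iff_integrableOn_Ioc_of_le hab]
    have hIoo : IntegrableOn (fun t => 1/8 * h * g (T - t) ^ 4 *
        Lt f g α₀ M₀ L₀ (T - t) ^ 2) (Set.Ioo a b) volume := by
      apply Integrable.mono' (g := fun _ => |1/8 * h| * Cg ^ 4 * M ^ 2)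
        (integrableOn_const (C := |1/8 * h| * Cg ^ 4 * M ^ 2) measure_Ioo_lt_top.ne)
      · apply ContinuousOn.aestronglyMeasurable _ measurableSet_Ioo
        have hmapIoc : Set.MapsTo (fun t => T - t) (Set.Ioo a b) (Set.Ioc (0:ℝ) T) :=
          fun t ht => ⟨by simp; linarith [ht.2], by simp; linarith [ht.1]⟩
        have hLt : ContinuousOn (fun t => Lt f g α₀ M₀ L₀ (T - t)) (Set.Ioo a b) :=
          (Lt_contOn hf hg hg_pos hα₀ hT).comp
            (continuous_const.sub continuous_id).continuousOn hmapIoc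
        exact (continuousOn_const.mul (((hgT.mono Set.Ioo_subset_Icc_self).pow 4))).mul
          (hLt.pow 2)
      · rw [ae_restrict_iff' measurableSet_Ioo]
        apply ae_of_all
        intro t ht
        have h1 : |g (T - t)| ≤ Cg := hCg _ ⟨by linarith [ht.2], by linarith [ht.1]⟩
        have h2 : |Lt f g α₀ M₀ L₀ (T - t)| ≤ M :=
          Lt_abs_le hf hg hg_pos hL₀ hCB' hCA' _ ⟨by linarith [ht.2], by linarith [ht.1]⟩
        have hg0 : (0:ℝ) ≤ |g (T - t)| := abs_nonneg _
        have hL0 : (0:ℝ) ≤ |Lt f g α₀ M₀ L₀ (T - t)| := abs_nonneg _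
        rw [Real.norm_eq_abs, abs_mul, abs_mul, abs_pow, abs_pow]
        gcongr
    exact hIoo.congr_set_ae Ioo_ae_eq_Ioc.symm
  exact hP1.sub hP2

lemma tau_nonneg : 0 ≤ tau f g α₀ M₀ := by
  unfold tau
  split
  · exact le_rfl
  · exact Real.sInf_nonneg (fun x hx => hx.1.le)

end Helpers

set_option maxHeartbeats 1600000 in
theorem stmt16 (f g : ℝ → ℝ)
    (hf_cont : ContinuousOn f (Set.Ici 0)) (hg_cont : ContinuousOn g (Set.Ici 0))
    (hf_nonneg : ∀ t, 0 ≤ t → 0 ≤ f t) (hg_pos : ∀ t, 0 < t → 0 < g t)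
    (α₀ M₀ L₀ L₁ : ℝ) (hα₀ : 0 < α₀) (hM₀ : 0 < M₀) (hL₀ : 0 < L₀) (hL₁ : 0 < L₁)
    (K : ℕ) (hK : 1 ≤ K) (h : ℝ) (hh : 0 < h)
    (hhbar : h < hbar f g α₀ M₀ L₀ L₁ ((K : ℝ) * h)) :
    (∀ k : ℕ, 1 ≤ k → (k : ℤ) ≤ ⌊(K : ℝ) - tau f g α₀ M₀ / h⌋ →
      gammaK f g α₀ M₀ L₀ L₁ ((K : ℝ) * h) h k < 1) ∧
    (∀ k : ℕ, ⌈(K : ℝ) - tau f g α₀ M₀ / h⌉ + 1 ≤ (k : ℤ) → k ≤ K →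
      1 < gammaK f g α₀ M₀ L₀ L₁ ((K : ℝ) * h) h k) ∧
    (∀ ℓ k : ℕ, 1 ≤ k → k ≤ K →
      gammaK f g α₀ M₀ L₀ L₁ (((K : ℝ) + (ℓ : ℝ)) * h) h (k + ℓ) =
        gammaK f g α₀ M₀ L₀ L₁ ((K : ℝ) * h) h k) := by
  have hT0 : (0:ℝ) < (K : ℝ) * h := by
    have : (0:ℝ) < (K : ℝ) := by exact_mod_cast hK
    positivity
  set T := (K : ℝ) * h with hTdef
  set τ := tau f g α₀ M₀ with hτdef
  have hτ0 : 0 ≤ τ := tau_nonneg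
  rw [hbar, lt_min_iff] at hhbar
  obtain ⟨hX, hY⟩ := hhbar
  refine ⟨?_, ?_, ?_⟩
  · -- part 1 : contraction
    intro k hk1 hk2
    have hk1' : (1:ℝ) ≤ (k:ℝ) := by exact_mod_cast hk1
    set a := ((k:ℝ) - 1) * h with hadef
    set b := (k:ℝ) * h with hbdef
    have ha0 : 0 ≤ a := by
      have : (0:ℝ) ≤ (k:ℝ) - 1 := by linarith
      positivity
    have hab : a < b := by
      rw [hadef, hbdef]; nlinarith
    have hkb : (k:ℝ) ≤ (K:ℝ) - τ / h := by
      have h1 : ((k:ℤ):ℝ) ≤ ((⌊(K : ℝ) - τ / h⌋ : ℤ) : ℝ) := by exact_mod_cast hk2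
      calc (k:ℝ) = ((k:ℤ):ℝ) := by norm_num
      _ ≤ _ := h1
      _ ≤ (K : ℝ) - τ / h := Int.floor_le _
    have hbτ : b ≤ T - τ := by
      have := mul_le_mul_of_nonneg_right hkb hh.le
      rw [sub_mul, div_mul_cancel₀ _ hh.ne'] at this
      linarith
    have hbT : b ≤ T := by linarith
    -- the max of f
    set F := sSup (f '' Set.Icc 0 T) with hFdef
    have hFbdd : BddAbove (f '' Set.Icc 0 T) :=
      (isCompact_Icc.image_of_continuousOn (hf_cont.mono (fun x hx => hx.1))).bddAbove
    have hFub : ∀ x ∈ Set.Icc (0:ℝ) T, f x ≤ F := fun x hx => le_csSup hFbdd ⟨x, hx, rfl⟩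
    have hFpos : 0 < F := by
      by_contra hF0
      push_neg at hF0
      have : Real.log 2 / F ≤ 0 :=
        div_nonpos_of_nonneg_of_nonpos (Real.log_nonneg one_le_two) hF0
      linarith
    have hhF : h * F < Real.log 2 := (lt_div_iff₀ hFpos).1 hX
    -- the inf of the ratio
    have hratio : ∀ s ∈ Set.Ioc τ T, h <
        (1/4 * g s ^ 2 * (alphaT f g α₀ s - MT f g α₀ M₀ s)) /
          (1/8 * g s ^ 4 * Lt f g α₀ M₀ L₀ s ^ 2 + 1/2 * L₁ * g s ^ 2) := by
      intro s hs
      by_cases hbdd : BddBelow ((fun t =>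
          (1/4 * g t ^ 2 * (alphaT f g α₀ t - MT f g α₀ M₀ t)) /
            (1/8 * g t ^ 4 * Lt f g α₀ M₀ L₀ t ^ 2 + 1/2 * L₁ * g t ^ 2)) '' Set.Ioc τ T)
      · exact lt_of_lt_of_le hY (csInf_le hbdd ⟨s, hs, rfl⟩)
      · rw [Real.sInf_of_not_bddBelow hbdd] at hY
        linarith
    -- pointwise positivity
    have hpos : ∀ t ∈ Set.Ioo a b,
        0 < deltaInt f g α₀ M₀ L₀ T h a t - 1/2 * L₁ * h * g (T - t) ^ 2 := by
      intro t ht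
      have hsτ : τ < T - t := by
        have : t < b := ht.2
        linarith
      have hsT : T - t ≤ T := by
        have : a < t := ht.1
        linarith
      have hs : T - t ∈ Set.Ioc τ T := ⟨hsτ, hsT⟩
      have hsg : 0 < g (T - t) := hg_pos _ (lt_of_le_of_lt hτ0 hsτ)
      have hr := hratio _ hs
      have hD : 0 < 1/8 * g (T - t) ^ 4 * Lt f g α₀ M₀ L₀ (T - t) ^ 2 +
          1/2 * L₁ * g (T - t) ^ 2 := by positivity
      have hND : h * (1/8 * g (T - t) ^ 4 * Lt f g α₀ M₀ L₀ (T - t) ^ 2 +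
          1/2 * L₁ * g (T - t) ^ 2) <
          1/4 * g (T - t) ^ 2 * (alphaT f g α₀ (T - t) - MT f g α₀ M₀ (T - t)) :=
        (lt_div_iff₀ hD).1 hr
      -- the exponential factor
      have htmem : t ∈ Set.Icc a b := Set.Ioo_subset_Icc_self ht
      have hfTint : IntervalIntegrable (fun u => f (T - u)) volume a t := by
        apply ContinuousOn.intervalIntegrable
        rw [Set.uIcc_of_le ht.1.le]
        exact (comp_sub_contOn (hf_cont.mono (fun x hx => hx.1)) ha0 hbT).mono
          (Set.Icc_subset_Icc le_rfl ht.2.le)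
      have hI0 : 0 ≤ ∫ u in a..t, f (T - u) := by
        apply intervalIntegral.integral_nonneg ht.1.le
        intro u hu
        exact hf_nonneg _ (by linarith [hu.2, ht.2])
      have hI1 : (∫ u in a..t, f (T - u)) ≤ F * (t - a) := by
        have hmono := intervalIntegral.integral_mono_on (μ := volume) ht.1.le hfTint
          intervalIntegrable_const (g := fun _ => F) (fun u hu => hFub (T - u)
            ⟨by linarith [hu.2, ht.2], by linarith [hu.1]⟩)
        simpa [intervalIntegral.integral_const, smul_eq_mul, mul_comm] using hmono
      have hIlog : (∫ u in a..t, f (T - u)) ≤ Real.log 2 := by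
        have h1 : F * (t - a) ≤ F * h := by
          apply mul_le_mul_of_nonneg_left _ hFpos.le
          have : b - a = h := by rw [hadef, hbdef]; ring
          linarith [ht.2]
        nlinarith
      have hE2 : (1:ℝ)/2 ≤ Real.exp (-(∫ u in a..t, f (T - u))) := by
        have : (1:ℝ)/2 = Real.exp (-Real.log 2) := by
          rw [Real.exp_neg, Real.exp_log two_pos]
          norm_num
        rw [this]
        exact Real.exp_le_exp.2 (by linarith)
      have hA : 0 < alphaT f g α₀ (T - t) - MT f g α₀ M₀ (T - t) := by
        nlinarith [mul_pos hh hD, sq_nonneg (g (T - t))]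
      have hkey : 1/4 * g (T - t) ^ 2 * (alphaT f g α₀ (T - t) - MT f g α₀ M₀ (T - t)) ≤
          1/2 * Real.exp (-(∫ u in a..t, f (T - u))) * g (T - t) ^ 2 *
            (alphaT f g α₀ (T - t) - MT f g α₀ M₀ (T - t)) := by
        nlinarith [mul_nonneg (mul_nonneg (by linarith : (0:ℝ) ≤
          Real.exp (-(∫ u in a..t, f (T - u))) - 1/2) (sq_nonneg (g (T - t)))) hA.le]
      unfold deltaInt
      nlinarith
    -- integrate
    have hIIδ : IntervalIntegrable (deltaInt f g α₀ M₀ L₀ T h a) volume a b :=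
      deltaInt_II hf_cont hg_cont hg_pos hα₀ hL₀.le ha0 hab.le hbT
    have hIIg : IntervalIntegrable (fun t => g (T - t) ^ 2) volume a b :=
      gT_sq_II hg_cont hab.le hbT
    have hII : IntervalIntegrable
        (fun t => deltaInt f g α₀ M₀ L₀ T h a t - 1/2 * L₁ * h * g (T - t) ^ 2) volume a b :=
      hIIδ.sub (hIIg.const_mul (1/2 * L₁ * h))
    have hposI := intervalIntegral_pos_of_pos_on hII hpos hab
    rw [intervalIntegral.integral_sub hIIδ (hIIg.const_mul (1/2 * L₁ * h)),
      intervalIntegral.integral_const_mul] at hposI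
    unfold gammaK
    linarith
  · -- part 2 : expansion
    intro k hk1 hk2
    have hτpos : 0 < τ := by
      rcases hτ0.lt_or_eq with hpos | heq
      · exact hpos
      · exfalso
        rw [← heq, zero_div, sub_zero, Int.ceil_natCast] at hk1
        have : (k : ℤ) ≤ (K : ℤ) := by exact_mod_cast hk2
        omega
    have hbranch : ¬ (0 < α₀ - M₀) := by
      intro hcon
      rw [tau, if_pos hcon] at hτdef
      exact hτpos.ne' hτdef
    have hτS : τ = sInf {t : ℝ | 0 < t ∧ (M₀ - α₀) / α₀ ^ 2 < Jfg f g t} := by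
      rw [hτdef, tau, if_neg hbranch]
    have hbound0 : 0 ≤ (M₀ - α₀) / α₀ ^ 2 := by
      push_neg at hbranch
      apply div_nonneg (by linarith) (sq_nonneg _)
    have hJle : ∀ s : ℝ, 0 ≤ s → s ≤ τ → Jfg f g s ≤ (M₀ - α₀) / α₀ ^ 2 := by
      intro s hs0 hsτ
      by_contra hgt
      push_neg at hgt
      rcases hs0.lt_or_eq with hspos | hseq
      · have hτs : τ ≤ s := by
          rw [hτS]
          exact csInf_le ⟨0, fun x hx => hx.1.le⟩ ⟨hspos, hgt⟩
        have hsτ' : s = τ := le_antisymm hsτ hτs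
        -- continuity of Jfg at τ from the left gives a contradiction
        have hcw : ContinuousWithinAt (Jfg f g) (Set.Icc 0 τ) τ :=
          (Jfg_contOn hf_cont hg_cont hτ0) τ ⟨hτ0, le_rfl⟩
        have hev : ∀ᶠ x in 𝓝[Set.Icc (0:ℝ) τ] τ,
            Jfg f g x ∈ Set.Ioi ((M₀ - α₀) / α₀ ^ 2) := by
          apply hcw (Ioi_mem_nhds _)
          rw [← hsτ']
          exact hgt
        have hmono : 𝓝[Set.Ioo (0:ℝ) τ] τ ≤ 𝓝[Set.Icc (0:ℝ) τ] τ :=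
          nhdsWithin_mono _ Set.Ioo_subset_Icc_self
        have hev' : ∀ᶠ x in 𝓝[Set.Ioo (0:ℝ) τ] τ,
            Jfg f g x ∈ Set.Ioi ((M₀ - α₀) / α₀ ^ 2) := hmono hev
        have hne : (𝓝[Set.Ioo (0:ℝ) τ] τ).NeBot := right_nhdsWithin_Ioo_neBot hτpos
        obtain ⟨x, hx1, hx2⟩ := (hev'.and self_mem_nhdsWithin).exists
        have : τ ≤ x := by
          rw [hτS]
          exact csInf_le ⟨0, fun y hy => hy.1.le⟩ ⟨hx2.1, hx1⟩
        linarith [hx2.2]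
      · rw [← hseq] at hgt
        have : Jfg f g 0 = 0 := intervalIntegral.integral_same
        rw [this] at hgt
        linarith
    -- interval bounds
    set a := ((k:ℝ) - 1) * h with hadef
    set b := (k:ℝ) * h with hbdef
    have hab : a < b := by rw [hadef, hbdef]; nlinarith
    have hbT : b ≤ T := by
      rw [hbdef, hTdef]
      have : (k:ℝ) ≤ (K:ℝ) := by exact_mod_cast hk2
      nlinarith
    have haτ : T - τ ≤ a := by
      have h1 : ((K:ℝ) - τ / h) ≤ (k:ℝ) - 1 := by
        have h2 : ((K:ℝ) - τ / h) ≤ ((⌈(K : ℝ) - τ / h⌉ : ℤ) : ℝ) := Int.le_ceil _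
        have h3 : ((⌈(K : ℝ) - τ / h⌉ : ℤ) : ℝ) + 1 ≤ (k:ℝ) := by exact_mod_cast hk1
        linarith
      have := mul_le_mul_of_nonneg_right h1 hh.le
      rw [sub_mul, div_mul_cancel₀ _ hh.ne'] at this
      rw [hadef, hTdef]
      linarith
    -- pointwise nonpositivity of delta
    have hδ_nonpos : ∀ t ∈ Set.Icc a b, deltaInt f g α₀ M₀ L₀ T h a t ≤ 0 := by
      intro t ht
      have hs0 : 0 ≤ T - t := by linarith [ht.2]
      have hsτ : T - t ≤ τ := by linarith [ht.1]
      have hJ : Jfg f g (T - t) ≤ (M₀ - α₀) / α₀ ^ 2 := hJle _ hs0 hsτ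
      have hnum : α₀ - M₀ + α₀ ^ 2 * Jfg f g (T - t) ≤ 0 := by
        rw [le_div_iff₀ (by positivity : (0:ℝ) < α₀ ^ 2)] at hJ
        nlinarith
      have hαM : alphaT f g α₀ (T - t) - MT f g α₀ M₀ (T - t) ≤ 0 := by
        rw [alpha_sub_M_eq hf_cont hα₀ hs0]
        apply div_nonpos_of_nonpos_of_nonneg _ (by positivity)
        have : (0:ℝ) ≤ c0 f (T - t) ^ 2 := sq_nonneg _
        nlinarith
      have hE : (0:ℝ) < Real.exp (-(∫ s in a..t, f (T - s))) := Real.exp_pos _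
      have h1 : 1/2 * Real.exp (-(∫ s in a..t, f (T - s))) * g (T - t) ^ 2 *
          (alphaT f g α₀ (T - t) - MT f g α₀ M₀ (T - t)) ≤ 0 := by
        apply mul_nonpos_of_nonneg_of_nonpos _ hαM
        positivity
      have h2 : (0:ℝ) ≤ 1/8 * h * g (T - t) ^ 4 * Lt f g α₀ M₀ L₀ (T - t) ^ 2 := by
        positivity
      unfold deltaInt
      linarith
    have hI1 : (∫ t in a..b, deltaInt f g α₀ M₀ L₀ T h a t) ≤ 0 := by
      have := intervalIntegral.integral_nonneg (μ := volume) hab.le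
        (f := fun t => -deltaInt f g α₀ M₀ L₀ T h a t)
        (fun u hu => neg_nonneg.2 (hδ_nonpos u hu))
      rw [intervalIntegral.integral_neg] at this
      linarith
    have hI2 : 0 < ∫ t in a..b, g (T - t) ^ 2 := by
      apply intervalIntegral_pos_of_pos_on (gT_sq_II hg_cont hab.le hbT) ?_ hab
      intro t ht
      have : 0 < g (T - t) := hg_pos _ (by linarith [ht.2])
      positivity
    have h3 : 0 < 1/2 * L₁ * h * ∫ t in a..b, g (T - t) ^ 2 := by positivity
    unfold gammaK
    linarith
  · -- part 3 : shift invariance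
    intro ℓ k hk1 hkK
    unfold gammaK
    push_cast
    have ha' : ((k:ℝ) + (ℓ:ℝ) - 1) * h = ((k:ℝ) - 1) * h + (ℓ:ℝ) * h := by ring
    have hb' : ((k:ℝ) + (ℓ:ℝ)) * h = (k:ℝ) * h + (ℓ:ℝ) * h := by ring
    have hδ : (∫ t in (((k:ℝ) + (ℓ:ℝ) - 1) * h)..(((k:ℝ) + (ℓ:ℝ)) * h),
        deltaInt f g α₀ M₀ L₀ (((K:ℝ) + (ℓ:ℝ)) * h) h (((k:ℝ) + (ℓ:ℝ) - 1) * h) t) =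
        ∫ t in (((k:ℝ) - 1) * h)..((k:ℝ) * h),
          deltaInt f g α₀ M₀ L₀ ((K:ℝ) * h) h (((k:ℝ) - 1) * h) t := by
      rw [ha', hb',
        ← intervalIntegral.integral_comp_add_right
          (fun t => deltaInt f g α₀ M₀ L₀ (((K:ℝ) + (ℓ:ℝ)) * h) h
            (((k:ℝ) - 1) * h + (ℓ:ℝ) * h) t) ((ℓ:ℝ) * h)]
      apply intervalIntegral.integral_congr
      intro t _
      simp only [deltaInt]
      have e1 : ((K:ℝ) + (ℓ:ℝ)) * h - (t + (ℓ:ℝ) * h) = (K:ℝ) * h - t := by ring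
      have e2 : (∫ s in (((k:ℝ) - 1) * h + (ℓ:ℝ) * h)..(t + (ℓ:ℝ) * h),
          f (((K:ℝ) + (ℓ:ℝ)) * h - s)) = ∫ s in (((k:ℝ) - 1) * h)..t, f ((K:ℝ) * h - s) := by
        rw [← intervalIntegral.integral_comp_add_right
          (fun s => f (((K:ℝ) + (ℓ:ℝ)) * h - s)) ((ℓ:ℝ) * h)]
        apply intervalIntegral.integral_congr
        intro s _
        congr 1
        ring
      rw [e1, e2]
    have hg2 : (∫ t in (((k:ℝ) + (ℓ:ℝ) - 1) * h)..(((k:ℝ) + (ℓ:ℝ)) * h),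
        g (((K:ℝ) + (ℓ:ℝ)) * h - t) ^ 2) =
        ∫ t in (((k:ℝ) - 1) * h)..((k:ℝ) * h), g ((K:ℝ) * h - t) ^ 2 := by
      rw [ha', hb',
        ← intervalIntegral.integral_comp_add_right
          (fun t => g (((K:ℝ) + (ℓ:ℝ)) * h - t) ^ 2) ((ℓ:ℝ) * h)]
      apply intervalIntegral.integral_congr
      intro t _
      congr 2
      ring
    rw [hδ, hg2]
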